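/- As y → ∞, y·E[e^{−α T^{(2,y)}} − 1] → −α; that is, y·∫_{[0,∞]} (e^{−αs} − 1) dμ^{(2)}_y(s) converges to −α as y → ∞. -/

import Mathlib

open MeasureTheory Filter Set
open scoped ENNReal

lemma key_integral (α y : ℝ) (hα : 0 < α) (hy : 0 < y)
    (μ : Measure ℝ≥0∞) [IsProbabilityMeasure μ]
    (hsurv : ∀ t : ℝ, 0 ≤ t →
      μ (Set.Ioi (ENNReal.ofReal t)) =
        ENNReal.ofReal (Real.exp (-(y / α) * (1 - Real.exp (-α * t))))) :
    ∫ s, ((if s = ∞ then 0 else Real.exp (-α * s.toReal)) - 1) ∂μ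
      = -(α / y) * (1 - Real.exp (-(y / α))) := by
  set g : ℝ≥0∞ → ℝ := fun s => if s = ∞ then 0 else Real.exp (-α * s.toReal) with hg
  have hg_mble : Measurable g := by
    apply Measurable.ite (MeasurableSet.singleton ∞) measurable_const
    exact (Real.measurable_exp.comp (ENNReal.measurable_toReal.const_mul (-α)))
  have hg_nonneg : ∀ s, 0 ≤ g s := by
    intro s
    simp only [hg]
    split
    · exact le_refl 0
    · exact (Real.exp_pos _).le
  have hg_le_one : ∀ s, g s ≤ 1 := by
    intro s
    simp only [hg]
    split
    · exact zero_le_one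
    · exact Real.exp_le_one_iff.2 (by nlinarith [ENNReal.toReal_nonneg (a := s)])
  set f : ℝ≥0∞ → ℝ := fun s => 1 - g s with hf
  have hf_mble : Measurable f := measurable_const.sub hg_mble
  have hf_intble : Integrable f μ := by
    refine (integrable_const (1 : ℝ)).mono' hf_mble.aestronglyMeasurable ?_
    refine Eventually.of_forall fun s => ?_
    have hfs : f s = 1 - g s := rfl
    rw [Real.norm_eq_abs, abs_le, hfs]
    constructor
    · nlinarith [hg_le_one s]
    · nlinarith [hg_nonneg s]
  have hf_nn : 0 ≤ᵐ[μ] f := Eventually.of_forall fun s => by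
    simp only [hf, Pi.zero_apply]; nlinarith [hg_le_one s]
  -- layer cake
  have hlayer := hf_intble.integral_eq_integral_meas_lt hf_nn
  -- identify the tail measure
  have htail : ∀ t ∈ Set.Ioi (0 : ℝ),
      (μ {a | t < f a}).toReal
        = if t < 1 then Real.exp (-(y / α) * t) else 0 := by
    intro t ht
    simp only [mem_Ioi] at ht
    by_cases ht1 : t < 1
    · have h1t : 0 < 1 - t := by linarith
      set c : ℝ := -(Real.log (1 - t)) / α with hc
      have hc_nonneg : 0 ≤ c := by
        rw [hc]
        apply div_nonneg _ hα.le
        simpa using Real.log_nonpos (by linarith) (by linarith)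
      have hexpc : Real.exp (-α * c) = 1 - t := by
        rw [hc]
        rw [show -α * (-(Real.log (1 - t)) / α) = Real.log (1 - t) by field_simp]
        exact Real.exp_log h1t
      have hset : {a : ℝ≥0∞ | t < f a} = Set.Ioi (ENNReal.ofReal c) := by
        ext s
        simp only [mem_setOf_eq, mem_Ioi, hf, hg]
        rcases eq_or_ne s ∞ with rfl | hs
        · simp [ENNReal.ofReal_lt_top, ht1]
        · simp only [if_neg hs]
          rw [show (t < 1 - Real.exp (-α * s.toReal)) ↔
              Real.exp (-α * s.toReal) < 1 - t by constructor <;> intro <;> linarith]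
          rw [← hexpc, Real.exp_lt_exp]
          rw [ENNReal.ofReal_lt_iff_lt_toReal hc_nonneg hs]
          constructor
          · intro h
            nlinarith
          · intro h
            nlinarith
      rw [hset, hsurv c hc_nonneg, hexpc, if_pos ht1]
      rw [show (1 : ℝ) - (1 - t) = t by ring]
      exact ENNReal.toReal_ofReal (Real.exp_pos _).le
    · have hset : {a : ℝ≥0∞ | t < f a} = ∅ := by
        ext s
        simp only [mem_setOf_eq, mem_empty_iff_false, iff_false, not_lt, hf]
        nlinarith [hg_nonneg s, not_lt.1 ht1]
      rw [hset, if_neg ht1]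
      simp
  have hIoi : ∫ t in Set.Ioi (0:ℝ), (μ {a | t < f a}).toReal
      = ∫ t in Set.Ioo (0:ℝ) 1, Real.exp (-(y / α) * t) := by
    rw [setIntegral_congr_fun measurableSet_Ioi htail]
    rw [show (fun t : ℝ => if t < 1 then Real.exp (-(y / α) * t) else 0)
        = Set.indicator (Set.Iio 1) (fun t => Real.exp (-(y / α) * t)) by
      ext t; simp [Set.indicator_apply, Set.mem_Iio]]
    rw [integral_indicator measurableSet_Iio]
    rw [Measure.restrict_restrict measurableSet_Iio]
    congr 1
    rw [Set.Iio_inter_Ioi]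
  have hval : ∫ t in Set.Ioo (0:ℝ) 1, Real.exp (-(y / α) * t)
      = (α / y) * (1 - Real.exp (-(y / α))) := by
    rw [← integral_Ioc_eq_integral_Ioo, ← intervalIntegral.integral_of_le zero_le_one]
    have hderiv : ∀ x ∈ Set.uIcc (0:ℝ) 1,
        HasDerivAt (fun t => -(α / y) * Real.exp (-(y / α) * t))
          (Real.exp (-(y / α) * x)) x := by
      intro x _
      have h1 : HasDerivAt (fun t : ℝ => -(y / α) * t) (-(y / α)) x := by
        simpa using (hasDerivAt_id x).const_mul (-(y / α))
      have h2 := (Real.hasDerivAt_exp (-(y / α) * x)).comp x h1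
      have h3 := h2.const_mul (-(α / y))
      convert h3 using 1
      all_goals try rfl
      field_simp
    rw [intervalIntegral.integral_eq_sub_of_hasDerivAt hderiv
      (by apply Continuous.intervalIntegrable; continuity)]
    simp only [mul_one, mul_zero, Real.exp_zero]
    ring
  have hfg : ∫ s, (g s - 1) ∂μ = -∫ s, f s ∂μ := by
    rw [← integral_neg]
    congr 1
    ext s
    simp only [hf]
    ring
  calc ∫ s, ((if s = ∞ then 0 else Real.exp (-α * s.toReal)) - 1) ∂μ
      = -∫ s, f s ∂μ := hfg
    _ = -(α / y) * (1 - Real.exp (-(y / α))) := by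
        rw [hlayer]; simp only [measureReal_def]; rw [hIoi, hval]; ring

/-- As `y → ∞`, `y · E[e^{−α T^{(2,y)}} − 1] → −α`, where `T^{(2,y)}` is the `[0,∞]`-valued
random time with law `μ y` determined by `P(T^{(2,y)} > t) = exp(−(y/α)(1−e^{−αt}))` for
`t ≥ 0` (so `T^{(2,y)} = ∞` with probability `e^{−y/α}`), with the convention
`e^{−α·∞} := 0`. -/
theorem y_mul_expectation_exp_sub_one_tendsto
    (α : ℝ) (hα : 0 < α)
    (μ : ℝ → Measure ℝ≥0∞)
    (hprob : ∀ y : ℝ, 0 < y → IsProbabilityMeasure (μ y))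
    (hsurv : ∀ y : ℝ, 0 < y → ∀ t : ℝ, 0 ≤ t →
      μ y (Set.Ioi (ENNReal.ofReal t)) =
        ENNReal.ofReal (Real.exp (-(y / α) * (1 - Real.exp (-α * t))))) :
    Tendsto
      (fun y : ℝ =>
        y * ∫ s, ((if s = ∞ then 0 else Real.exp (-α * s.toReal)) - 1) ∂(μ y))
      atTop (nhds (-α)) := by
  have heq : (fun y : ℝ =>
      y * ∫ s, ((if s = ∞ then 0 else Real.exp (-α * s.toReal)) - 1) ∂(μ y))
      =ᶠ[atTop] fun y => -α * (1 - Real.exp (-(y / α))) := by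
    filter_upwards [eventually_gt_atTop (0:ℝ)] with y hy
    have := hprob y hy
    rw [key_integral α y hα hy (μ y) (hsurv y hy)]
    field_simp
  apply Tendsto.congr' heq.symm
  have h1 : Tendsto (fun y : ℝ => Real.exp (-(y / α))) atTop (nhds 0) := by
    apply Real.tendsto_exp_atBot.comp
    apply tendsto_neg_atTop_atBot.comp
    exact tendsto_id.atTop_div_const hα
  have h2 : Tendsto (fun y : ℝ => -α * (1 - Real.exp (-(y / α)))) atTop
      (nhds (-α * (1 - 0))) := (tendsto_const_nhds.sub h1).const_mul _
  simpa using h2
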